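/- Let H be a complex Hilbert space with dim H ≥ 3 and let φ : B_s(H) → B_s(H) be a surjective map such that for all A, B, C ∈ B_s(H), A − B ↔_c C if and only if φ(A) − φ(B) ↔_c φ(C). Then for all A, B ∈ B_s(H), (φ(A) − φ(B))^c = φ(A − B)^c and consequently (φ(A) − φ(B))^{cc} = φ(A − B)^{cc}. -/
import Mathlib


noncomputable section

variable {H : Type*} [NormedAddCommGroup H] [InnerProductSpace ℂ H] [CompleteSpace H]

/-- `A ↔_c B`: the self-adjoint operators `A` and `B` commute. -/
def CommC (A B : selfAdjoint (H →L[ℂ] H)) : Prop :=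
  (A : H →L[ℂ] H) * (B : H →L[ℂ] H) = (B : H →L[ℂ] H) * (A : H →L[ℂ] H)

/-- `M^c`: the set of self-adjoint operators commuting with every member of `M`. -/
def CSet (M : Set (selfAdjoint (H →L[ℂ] H))) : Set (selfAdjoint (H →L[ℂ] H)) :=
  {X | ∀ T ∈ M, CommC X T}

/-- `M^{cc} = (M^c)^c`. -/
def CCSet (M : Set (selfAdjoint (H →L[ℂ] H))) : Set (selfAdjoint (H →L[ℂ] H)) :=
  CSet (CSet M)

theorem stmt13
    (hdim : 3 ≤ Module.rank ℂ H)
    (φ : selfAdjoint (H →L[ℂ] H) → selfAdjoint (H →L[ℂ] H))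
    (hsurj : Function.Surjective φ)
    (hpres : ∀ A B C : selfAdjoint (H →L[ℂ] H),
      CommC (A - B) C ↔ CommC (φ A - φ B) (φ C)) :
    ∀ A B : selfAdjoint (H →L[ℂ] H),
      CSet {φ A - φ B} = CSet {φ (A - B)} ∧
      CCSet {φ A - φ B} = CCSet {φ (A - B)} := by
  -- pick Z with φ Z = 0
  obtain ⟨Z, hZ⟩ := hsurj 0
  -- Z commutes with every C
  have hZcomm : ∀ C : selfAdjoint (H →L[ℂ] H), CommC Z C := by
    intro C
    have h : CommC (φ C - φ Z) (φ C) := by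
      simp [CommC, hZ]
    have h2 : CommC (C - Z) C := (hpres C Z C).mpr h
    simp only [CommC, AddSubgroup.coe_sub, sub_mul, mul_sub] at h2
    have := sub_right_injective h2
    simp [CommC, this]
  -- φ 0 commutes with every φ C
  have h0comm : ∀ C : selfAdjoint (H →L[ℂ] H), CommC (φ 0) (φ C) := by
    intro C
    have h : CommC ((0 : selfAdjoint (H →L[ℂ] H)) - Z) C := by
      have hc := hZcomm C
      simp only [CommC] at hc ⊢
      simp [sub_mul, mul_sub, hc]
    have := (hpres 0 Z C).mp h
    simpa [CommC, hZ] using this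
  intro A B
  have key : CSet {φ A - φ B} = CSet {φ (A - B)} := by
    ext X
    obtain ⟨C, rfl⟩ := hsurj X
    simp only [CSet, Set.mem_setOf_eq, Set.mem_singleton_iff, forall_eq]
    have symm : ∀ P Q : selfAdjoint (H →L[ℂ] H), CommC P Q ↔ CommC Q P := by
      intro P Q; constructor <;> exact fun h => h.symm
    rw [symm _ (φ A - φ B)]
    rw [← hpres A B C]
    have step : CommC (A - B) C ↔ CommC (φ (A - B) - φ 0) (φ C) := by
      have := hpres (A - B) 0 C
      simpa using this
    rw [step]
    -- remove φ 0 using centrality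
    have hc := h0comm C
    simp only [CommC, AddSubgroup.coe_sub] at *
    constructor
    · intro h
      have : (φ (A - B) : H →L[ℂ] H) * φ C - φ 0 * φ C
          = φ C * φ (A - B) - φ C * φ 0 := by
        simpa [sub_mul, mul_sub] using h
      rw [hc] at this
      have := sub_left_injective this
      rw [this]
    · intro h
      simp [sub_mul, mul_sub, hc, ← h]
  exact ⟨key, by rw [CCSet, CCSet, key]⟩
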